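/- arXiv:1803.10104 — 3 statements merged into one kernel-verified Lean document; each statement's English description precedes it below -/
import Mathlib

section
/- Let G = (V,E) be a finite directed graph consisting of a single strongly connected component, and let T_{r,m} = ((W, B ∪ R), τ) be a witness-tree of G with root r and m = |R| red edges. Then the number of simple cycles of G that contain r is at most m. -/
/-- A simple cycle of a directed graph with edge relation `E`: a nonempty
finite set `C` of vertices together with a bijection `η : C → C` (represented
as a function on all of `V` that is the identity outside `C`), such that
`(v, η v)` is an edge for every `v ∈ C`, and `η^[n] v = v` iff `|C| ∣ n`. -/
structure SimpleCycle {V : Type*} (E : V → V → Prop) where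
  C : Finset V
  nonempty : C.Nonempty
  η : V → V
  bij : Set.BijOn η (↑C) (↑C)
  fix : ∀ v ∉ C, η v = v
  edge : ∀ v ∈ C, E v (η v)
  minimal : ∀ v ∈ C, ∀ n : ℕ, η^[n] v = v ↔ C.card ∣ n

/-- A witness-tree of a directed graph `(V, E)` with root label `r ∈ V`:
a vertex set `W` with a distinguished root, blue edges `B`, red edges `R`,
and a labeling `τ : W → V` satisfying conditions (1)-(9). -/
structure WitnessTree {V : Type*} (E : V → V → Prop) (r : V) (W : Type*) where
  root : W
  B : Finset (W × W)
  R : Finset (W × W)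
  τ : W → V
  /-- (1) the edges are partitioned into blue and red edges -/
  disj : ∀ e : W × W, ¬(e ∈ B ∧ e ∈ R)
  /-- (2) all red edges lead back to the root -/
  red_to_root : ∀ e ∈ R, e.2 = root
  /-- (3) no blue edge leads back to the root -/
  blue_not_root : ∀ e ∈ B, e.2 ≠ root
  /-- (4) every non-root vertex has at least one incoming blue edge -/
  blue_exists : ∀ w : W, w ≠ root → ∃ w', (w', w) ∈ B
  /-- (5) every vertex has at most one incoming blue edge -/
  blue_unique : ∀ w w₁ w₂ : W, (w₁, w) ∈ B → (w₂, w) ∈ B → w₁ = w₂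
  /-- (6) the graph is labeled by an unfolding of `G` -/
  label_edge : ∀ e : W × W, (e ∈ B ∨ e ∈ R) → E (τ e.1) (τ e.2)
  /-- (7) the unfolding is complete -/
  complete : ∀ (w : W) (v' : V), E (τ w) v' →
    ∃ w', ((w, w') ∈ B ∨ (w, w') ∈ R) ∧ τ w' = v'
  /-- (8) on every path from the root to a leaf in the rooted tree `(W, B)`,
  distinct vertices carry distinct labels (equivalently, the label of a vertex
  differs from the labels of all of its strict blue descendants) -/
  path_distinct : ∀ w w' : W, Relation.TransGen (fun a b => (a, b) ∈ B) w w' → τ w ≠ τ w'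
  /-- (9) the root is labeled by `r` -/
  root_label : τ root = r

section
variable {V : Type*} {E : V → V → Prop}

lemma SimpleCycle.ext' {c₁ c₂ : SimpleCycle E} (h1 : c₁.C = c₂.C) (h2 : c₁.η = c₂.η) :
    c₁ = c₂ := by
  cases c₁; cases c₂; simp_all

lemma orbit_mem (c : SimpleCycle E) {r : V} (hr : r ∈ c.C) (i : ℕ) : c.η^[i] r ∈ c.C := by
  induction i with
  | zero => simpa
  | succ n ih => rw [Function.iterate_succ_apply']; exact c.bij.mapsTo ih

lemma orbit_ne (c : SimpleCycle E) {r : V} (hr : r ∈ c.C) {i : ℕ} (h0 : 0 < i)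
    (hk : i < c.C.card) : c.η^[i] r ≠ r := by
  intro h
  have h1 := (c.minimal r hr i).mp h
  have := Nat.le_of_dvd h0 h1
  omega

lemma orbit_inj_aux (c : SimpleCycle E) {r : V} (hr : r ∈ c.C) {i j : ℕ} (hij : i < j)
    (hj : j < c.C.card) (h : c.η^[i] r = c.η^[j] r) : False := by
  have hK : c.η^[c.C.card] r = r := (c.minimal r hr _).mpr dvd_rfl
  have h2 : c.η^[c.C.card - j + i] r = r := by
    have h3 := congrArg (c.η^[c.C.card - j]) h
    rw [← Function.iterate_add_apply, ← Function.iterate_add_apply,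
      show c.C.card - j + j = c.C.card by omega, hK] at h3
    exact h3
  have h4 := Nat.le_of_dvd (by omega) ((c.minimal r hr _).mp h2)
  omega

lemma orbit_eq [DecidableEq V] (c : SimpleCycle E) {r : V} (hr : r ∈ c.C) :
    (Finset.range c.C.card).image (fun i => c.η^[i] r) = c.C := by
  apply Finset.eq_of_subset_of_card_le
  · intro v hv
    obtain ⟨i, _, rfl⟩ := Finset.mem_image.mp hv
    exact orbit_mem c hr i
  · rw [Finset.card_image_of_injOn, Finset.card_range]
    intro i hi j hj hij
    simp only [Finset.coe_range, Set.mem_Iio] at hi hj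
    by_contra hne
    rcases lt_trichotomy i j with h | h | h
    · exact orbit_inj_aux c hr h hj hij
    · exact hne h
    · exact orbit_inj_aux c hr h hi hij.symm

end

/-- Lemma 2 (soundness of witness-trees): if `G` is a single SCC and has a
witness-tree with root label `r` and `m` red edges, then `G` has at most `m`
simple cycles containing `r`. -/
theorem witness_tree_bounds_cycles {V : Type*} [Fintype V] (E : V → V → Prop)
    (hscc : ∀ u v : V, Relation.ReflTransGen E u v) (r : V)
    (W : Type*) [Finite W] (T : WitnessTree E r W) :
    Nat.card {c : SimpleCycle E // r ∈ c.C} ≤ T.R.card := by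
  classical
  -- For each simple cycle through r, there is a blue path from the root
  -- following the cycle labels, ending with a red edge back to the root.
  have key : ∀ c : {c : SimpleCycle E // r ∈ c.C}, ∃ p : ℕ → W,
      p 0 = T.root ∧ (∀ j < c.1.C.card - 1, (p j, p (j+1)) ∈ T.B) ∧
      (∀ j ≤ c.1.C.card - 1, T.τ (p j) = c.1.η^[j] r) ∧
      (p (c.1.C.card - 1), T.root) ∈ T.R := by
    rintro ⟨c, hr⟩
    have hk1 : 1 ≤ c.C.card := c.nonempty.card_pos
    have claim : ∀ i, i < c.C.card → ∃ p : ℕ → W, p 0 = T.root ∧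
        (∀ j < i, (p j, p (j+1)) ∈ T.B) ∧ (∀ j ≤ i, T.τ (p j) = c.η^[j] r) := by
      intro i
      induction i with
      | zero =>
        intro _
        refine ⟨fun _ => T.root, rfl, fun j hj => absurd hj (Nat.not_lt_zero j), ?_⟩
        intro j hj
        interval_cases j
        simpa using T.root_label
      | succ n ih =>
        intro hn
        obtain ⟨p, hp0, hpB, hpτ⟩ := ih (by omega)
        have hE : E (T.τ (p n)) (c.η^[n+1] r) := by
          rw [hpτ n le_rfl, Function.iterate_succ_apply']
          exact c.edge _ (orbit_mem c hr n)
        obtain ⟨w', hw', hτw'⟩ := T.complete (p n) _ hE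
        have hblue : (p n, w') ∈ T.B := by
          rcases hw' with h | h
          · exact h
          · exfalso
            have hroot : w' = T.root := T.red_to_root _ h
            apply orbit_ne c hr (Nat.succ_pos n) hn
            rw [← hτw', hroot, T.root_label]
        refine ⟨fun j => if j = n+1 then w' else p j, by simp [hp0], ?_, ?_⟩
        · intro j hj
          by_cases hjn : j = n
          · subst hjn
            simpa using hblue
          · have hjlt : j < n := by omega
            simp only [show j ≠ n+1 by omega, show j+1 ≠ n+1 by omega, if_neg,
              ite_false]
            exact hpB j hjlt
        · intro j hj
          by_cases hjn : j = n+1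
          · subst hjn; simpa using hτw'
          · simp only [hjn, ite_false]
            exact hpτ j (by omega)
    obtain ⟨p, hp0, hpB, hpτ⟩ := claim (c.C.card - 1) (by omega)
    have hlast : c.η (c.η^[c.C.card - 1] r) = r := by
      have h5 : c.η^[c.C.card - 1 + 1] r = r := by
        rw [show c.C.card - 1 + 1 = c.C.card by omega]
        exact (c.minimal r hr _).mpr dvd_rfl
      rwa [Function.iterate_succ_apply'] at h5
    have hE : E (T.τ (p (c.C.card - 1))) r := by
      rw [hpτ _ le_rfl]
      have h6 := c.edge _ (orbit_mem c hr (c.C.card - 1))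
      rwa [hlast] at h6
    obtain ⟨w', hw', hτw'⟩ := T.complete _ _ hE
    have hrt : Relation.ReflTransGen (fun a b => (a, b) ∈ T.B) T.root (p (c.C.card - 1)) := by
      have haux : ∀ i ≤ c.C.card - 1,
          Relation.ReflTransGen (fun a b => (a, b) ∈ T.B) T.root (p i) := by
        intro i
        induction i with
        | zero => intro _; rw [hp0]
        | succ n ih => intro h; exact (ih (by omega)).tail (hpB n (by omega))
      exact haux _ le_rfl
    rcases hw' with hBlu | hRed
    · exfalso
      exact T.path_distinct T.root w' (Relation.TransGen.tail' hrt hBlu)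
        (by rw [T.root_label, hτw'])
    · have hroot : w' = T.root := T.red_to_root _ hRed
      rw [hroot] at hRed
      exact ⟨p, hp0, hpB, hpτ, hRed⟩
  choose p hp0 hpB hpτ hpR using key
  -- blue chains from the root to a given vertex are unique
  have chainU : ∀ n m (pp qq : ℕ → W), pp 0 = T.root → qq 0 = T.root →
      (∀ j < n, (pp j, pp (j+1)) ∈ T.B) → (∀ j < m, (qq j, qq (j+1)) ∈ T.B) →
      pp n = qq m → n = m ∧ ∀ j ≤ n, pp j = qq j := by
    intro n
    induction n with
    | zero =>
      intro m pp qq hpp0 hqq0 _ hqqB h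
      match m with
      | 0 =>
        refine ⟨rfl, fun j hj => ?_⟩
        interval_cases j
        rw [hpp0, hqq0]
      | m+1 =>
        exfalso
        exact T.blue_not_root _ (hqqB m (by omega)) (by rw [← h, hpp0])
    | succ n ih =>
      intro m pp qq hpp0 hqq0 hppB hqqB h
      match m with
      | 0 =>
        exfalso
        exact T.blue_not_root _ (hppB n (by omega)) (by rw [h, hqq0])
      | m+1 =>
        have hpq : pp n = qq m :=
          T.blue_unique (pp (n+1)) _ _ (hppB n (by omega))
            (by rw [h]; exact hqqB m (by omega))
        obtain ⟨hnm, hj⟩ := ih m pp qq hpp0 hqq0 (fun j hj => hppB j (by omega))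
          (fun j hj => hqqB j (by omega)) hpq
        subst hnm
        refine ⟨rfl, fun j hjle => ?_⟩
        by_cases hjn : j = n+1
        · subst hjn; exact h
        · exact hj j (by omega)
  set F : {c : SimpleCycle E // r ∈ c.C} → ↥T.R :=
    fun c => ⟨(p c (c.1.C.card - 1), T.root), hpR c⟩ with hF
  have hinj : Function.Injective F := by
    intro c₁ c₂ hFeq
    have hw : p c₁ (c₁.1.C.card - 1) = p c₂ (c₂.1.C.card - 1) := by
      have := congrArg Subtype.val hFeq
      simpa [hF, Prod.ext_iff] using this
    obtain ⟨hnm, hj⟩ := chainU _ _ _ _ (hp0 c₁) (hp0 c₂) (hpB c₁) (hpB c₂) hw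
    have hk1 : 1 ≤ c₁.1.C.card := c₁.1.nonempty.card_pos
    have hk2 : 1 ≤ c₂.1.C.card := c₂.1.nonempty.card_pos
    have hkk : c₁.1.C.card = c₂.1.C.card := by omega
    have hlab : ∀ j < c₁.1.C.card, c₁.1.η^[j] r = c₂.1.η^[j] r := by
      intro j hjlt
      have h1 := hpτ c₁ j (by omega)
      have h2 := hpτ c₂ j (by omega)
      rw [← h1, ← h2, hj j (by omega)]
    have hC : c₁.1.C = c₂.1.C := by
      rw [← orbit_eq c₁.1 c₁.2, ← orbit_eq c₂.1 c₂.2, ← hkk]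
      apply Finset.image_congr
      intro i hi
      exact hlab i (Finset.mem_range.mp hi)
    have hη : c₁.1.η = c₂.1.η := by
      funext v
      by_cases hv : v ∈ c₁.1.C
      · have hv' : v ∈ (Finset.range c₁.1.C.card).image (fun i => c₁.1.η^[i] r) := by
          rw [orbit_eq c₁.1 c₁.2]; exact hv
        obtain ⟨i, hi, rfl⟩ := Finset.mem_image.mp hv'
        rw [Finset.mem_range] at hi
        rw [← Function.iterate_succ_apply' c₁.1.η i r, hlab i hi,
          ← Function.iterate_succ_apply' c₂.1.η i r]
        by_cases hik : i + 1 < c₁.1.C.card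
        · exact hlab (i+1) hik
        · have hik' : i + 1 = c₁.1.C.card := by omega
          simp only [Nat.succ_eq_add_one]
          rw [hik', (c₁.1.minimal r c₁.2 _).mpr dvd_rfl, hkk,
            (c₂.1.minimal r c₂.2 _).mpr dvd_rfl]
      · rw [c₁.1.fix v hv, c₂.1.fix v (hC ▸ hv)]
    exact Subtype.ext (SimpleCycle.ext' hC hη)
  calc Nat.card {c : SimpleCycle E // r ∈ c.C} ≤ Nat.card ↥T.R :=
        Nat.card_le_card_of_injective F hinj
    _ = T.R.card := Nat.card_eq_finsetCard _
end

section
/- (Soundness of bounded-synthesis annotations.) Let (V,E) be a finite directed graph, F ⊆ V a set of rejecting vertices, and v₀ ∈ V an initial vertex. Suppose λ : V → {⊥} ∪ ℕ is a valid annotation, i.e., (i) λ(v₀) ≠ ⊥, and (ii) whenever λ(v) = k ∈ ℕ and (v,v') ∈ E, then λ(v') = k' ∈ ℕ with k' ≥ k, and moreover k' > k if v' ∈ F. Then every infinite path v₀ v₁ v₂ … in (V,E) starting at v₀ (with (vᵢ, vᵢ₊₁) ∈ E for all i) visits F only finitely often; i.e., there is no infinite path from v₀ on which vertices of F occur infinitely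 many times. -/
/-- Soundness of bounded-synthesis annotations: if a finite directed graph
`(V, E)` with rejecting vertices `F` and initial vertex `v₀` admits a valid
annotation `lam : V → Option ℕ` (where `none` plays the role of `⊥`), then
every infinite path starting at `v₀` visits `F` only finitely often. -/
theorem annotation_sound {V : Type*} [Fintype V] (E : V → V → Prop)
    (F : Set V) (v₀ : V) (lam : V → Option ℕ)
    (h0 : lam v₀ ≠ none)
    (hstep : ∀ v v' : V, ∀ k : ℕ, lam v = some k → E v v' →
      ∃ k' : ℕ, lam v' = some k' ∧ k ≤ k' ∧ (v' ∈ F → k < k')) :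
    ∀ p : ℕ → V, p 0 = v₀ → (∀ i, E (p i) (p (i + 1))) →
      {i : ℕ | p i ∈ F}.Finite := by
  intro p hp0 hE
  -- every vertex on the path has a defined annotation
  have hsome : ∀ i, ∃ k, lam (p i) = some k := by
    intro i
    induction i with
    | zero =>
      rw [hp0]
      cases h : lam v₀ with
      | none => exact absurd h h0
      | some k => exact ⟨k, rfl⟩
    | succ n ih =>
      obtain ⟨k, hk⟩ := ih
      obtain ⟨k', hk', _, _⟩ := hstep _ _ k hk (hE n)
      exact ⟨k', hk'⟩
  set f : ℕ → ℕ := fun i => (lam (p i)).getD 0 with hfdef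
  have hf : ∀ i, lam (p i) = some (f i) := by
    intro i
    obtain ⟨k, hk⟩ := hsome i
    simp [hfdef, hk]
  have hstep' : ∀ i, f i ≤ f (i + 1) ∧ (p (i + 1) ∈ F → f i < f (i + 1)) := by
    intro i
    obtain ⟨k', hk', hle, hlt⟩ := hstep _ _ (f i) (hf i) (hE i)
    have : k' = f (i + 1) := by
      have := (hf (i + 1)).symm.trans hk'
      exact (Option.some.inj this).symm
    subst this
    exact ⟨hle, hlt⟩
  have hmono : Monotone f := monotone_nat_of_le_succ fun i => (hstep' i).1
  have hlt : ∀ i j, i < j → p j ∈ F → f i < f j := by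
    intro i j hij hj
    obtain ⟨m, rfl⟩ := Nat.exists_eq_add_of_lt hij
    calc f i ≤ f (i + m) := hmono (Nat.le_add_right _ _)
      _ < f (i + m + 1) := (hstep' (i + m)).2 hj
  by_contra hinf
  have hInf : {i : ℕ | p i ∈ F}.Infinite := hinf
  have hinj : Set.InjOn f {i : ℕ | p i ∈ F} := by
    intro i hi j hj hij
    by_contra hne
    rcases Nat.lt_or_ge i j with h | h
    · exact absurd hij (Nat.ne_of_lt (hlt i j h hj))
    · have h' : j < i := lt_of_le_of_ne h (Ne.symm hne)
      exact absurd hij.symm (Nat.ne_of_lt (hlt j i h' hi))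
  have himg : (f '' {i : ℕ | p i ∈ F}).Infinite := hInf.image hinj
  have hsub : f '' {i : ℕ | p i ∈ F} ⊆ Set.range (fun v : V => (lam v).getD 0) := by
    rintro x ⟨i, _, rfl⟩
    exact ⟨p i, rfl⟩
  exact himg (Set.Finite.subset (Set.finite_range _) hsub)
end

section
/- (Completeness of bounded-synthesis annotations.) Let (V,E) be a finite directed graph, F ⊆ V a set of rejecting vertices, and v₀ ∈ V an initial vertex. Suppose that no infinite path starting at v₀ visits F infinitely often. Then there exists a valid annotation λ : V → {⊥} ∪ ℕ, i.e., a function with (i) λ(v₀) ≠ ⊥, and (ii) whenever λ(v) = k ∈ ℕ and (v,v') ∈ E, then λ(v') = k' ∈ ℕ with k' ≥ k, and k' > k if v' ∈ F; moreover λ can be chosen so that all its natural-number values are at most |V|. -/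
open Classical in
/-- The set of possible "F-visit counts" of finite walks from `v₀` to `v`. -/
noncomputable def annSet {V : Type*} (E : V → V → Prop) (F : Set V) (v₀ v : V) : Set ℕ :=
  {k | ∃ n, ∃ p : ℕ → V, p 0 = v₀ ∧ (∀ i < n, E (p i) (p (i + 1))) ∧ p n = v ∧
    ((Finset.range (n + 1)).filter fun m => p m ∈ F).card = k}

/-- From a walk with a repeated `F`-vertex, build an infinite path visiting `F`
infinitely often. -/
theorem cycle_to_infinite {V : Type*} (E : V → V → Prop) (F : Set V) (v₀ : V)
    (n : ℕ) (p : ℕ → V) (hp0 : p 0 = v₀) (hE : ∀ i < n, E (p i) (p (i + 1)))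
    (i j : ℕ) (hij : i < j) (hjn : j ≤ n) (hpp : p i = p j) (hiF : p i ∈ F) :
    ∃ q : ℕ → V, q 0 = v₀ ∧ (∀ m, E (q m) (q (m + 1))) ∧ {m | q m ∈ F}.Infinite := by
  set g : ℕ → ℕ := fun m => Nat.rec 0 (fun _ s => if s + 1 = j then i else s + 1) m with hg
  have hg0 : g 0 = 0 := rfl
  have hgs : ∀ m, g (m + 1) = if g m + 1 = j then i else g m + 1 := fun m => rfl
  have hinv : ∀ m, g m < j := by
    intro m
    induction m with
    | zero => rw [hg0]; omega
    | succ m ih =>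
      rw [hgs]
      split
      · exact hij
      · omega
  have hedge : ∀ m, E (p (g m)) (p (g (m + 1))) := by
    intro m
    rw [hgs]
    split
    · rename_i hc
      rw [hpp, ← hc]
      exact hE _ (by have := hinv m; omega)
    · exact hE _ (by have := hinv m; omega)
  have hclaim : ∀ t m, g m + t = j → g (m + t) = i := by
    intro t
    induction t with
    | zero => intro m hm; exact absurd hm (by have := hinv m; omega)
    | succ t ih =>
      intro m hm
      by_cases hc : g m + 1 = j
      · have ht : t = 0 := by omega
        subst ht
        rw [show m + (0 + 1) = m + 1 by omega, hgs, if_pos hc]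
      · have h1 : g (m + 1) = g m + 1 := by rw [hgs, if_neg hc]
        rw [show m + (t + 1) = (m + 1) + t by omega]
        exact ih (m + 1) (by omega)
  refine ⟨fun m => p (g m), by show p (g 0) = v₀; rw [hg0, hp0], hedge, ?_⟩
  by_contra hfin
  rw [Set.not_infinite] at hfin
  obtain ⟨b, hb⟩ := hfin.bddAbove
  have hlt : g (b + 1) < j := hinv (b + 1)
  have hgi : g ((b + 1) + (j - g (b + 1))) = i := hclaim _ _ (by omega)
  have hmem : (b + 1) + (j - g (b + 1)) ∈ {m | p (g m) ∈ F} := by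
    simp only [Set.mem_setOf_eq, hgi]; exact hiF
  have := hb hmem
  omega

open Classical in
/-- If no infinite path from `v₀` visits `F` infinitely often, then every finite
walk from `v₀` visits `F` at most `|V|` times. -/
theorem count_le {V : Type*} [Fintype V] (E : V → V → Prop) (F : Set V) (v₀ : V)
    (h : ¬ ∃ p : ℕ → V, p 0 = v₀ ∧ (∀ i, E (p i) (p (i + 1))) ∧
      {i : ℕ | p i ∈ F}.Infinite)
    (n : ℕ) (p : ℕ → V) (hp0 : p 0 = v₀) (hE : ∀ i < n, E (p i) (p (i + 1))) :
    ((Finset.range (n + 1)).filter fun m => p m ∈ F).card ≤ Fintype.card V := by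
  classical
  by_contra hcard
  push_neg at hcard
  obtain ⟨a, ha, b, hb, hab, hpab⟩ :=
    Finset.exists_ne_map_eq_of_card_lt_of_maps_to (t := Finset.univ)
      (by rw [Finset.card_univ]; exact hcard) (fun x _ => Finset.mem_univ (p x))
  rw [Finset.mem_filter, Finset.mem_range] at ha hb
  obtain ⟨ha1, ha2⟩ := ha
  obtain ⟨hb1, hb2⟩ := hb
  rcases lt_or_gt_of_ne hab with hlt | hlt
  · obtain ⟨q, hq0, hqE, hqinf⟩ := cycle_to_infinite E F v₀ n p hp0 hE a b hlt
      (by omega) hpab ha2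
    exact h ⟨q, hq0, fun m => hqE m, hqinf⟩
  · obtain ⟨q, hq0, hqE, hqinf⟩ := cycle_to_infinite E F v₀ n p hp0 hE b a hlt
      (by omega) hpab.symm hb2
    exact h ⟨q, hq0, fun m => hqE m, hqinf⟩

/-- Completeness of bounded-synthesis annotations: if no infinite path of the
finite directed graph `(V, E)` starting at `v₀` visits the rejecting set `F`
infinitely often, then there is a valid annotation `lam : V → Option ℕ`
(where `none` plays the role of `⊥`) whose numeric values are all at most
`|V|`. -/
theorem annotation_complete {V : Type*} [Fintype V] (E : V → V → Prop)
    (F : Set V) (v₀ : V)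
    (h : ¬ ∃ p : ℕ → V, p 0 = v₀ ∧ (∀ i, E (p i) (p (i + 1))) ∧
      {i : ℕ | p i ∈ F}.Infinite) :
    ∃ lam : V → Option ℕ,
      lam v₀ ≠ none ∧
      (∀ v v' : V, ∀ k : ℕ, lam v = some k → E v v' →
        ∃ k' : ℕ, lam v' = some k' ∧ k ≤ k' ∧ (v' ∈ F → k < k')) ∧
      (∀ v : V, ∀ k : ℕ, lam v = some k → k ≤ Fintype.card V) := by
  classical
  have hbd : ∀ v, BddAbove (annSet E F v₀ v) := by
    intro v
    refine ⟨Fintype.card V, ?_⟩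
    rintro k ⟨n, p, h1, h2, h3, rfl⟩
    exact count_le E F v₀ h n p h1 h2
  refine ⟨fun v => if hv : (annSet E F v₀ v).Nonempty
      then some (sSup (annSet E F v₀ v)) else none, ?_, ?_, ?_⟩
  · have hne : (annSet E F v₀ v₀).Nonempty := by
      refine ⟨_, 0, fun _ => v₀, rfl, fun i hi => absurd hi (by omega), rfl, rfl⟩
    simp [dif_pos hne]
  · intro v v' k hvk hvv'
    by_cases hv : (annSet E F v₀ v).Nonempty
    · simp only [dif_pos hv] at hvk
      have hk : sSup (annSet E F v₀ v) = k := Option.some.inj hvk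
      have hmem : k ∈ annSet E F v₀ v := hk ▸ Nat.sSup_mem hv (hbd v)
      obtain ⟨n, p, h1, h2, h3, hcount⟩ := hmem
      set p' : ℕ → V := fun m => if m ≤ n then p m else v' with hp'
      have hpn : p' (n + 1) = v' := if_neg (by omega)
      have hmem' : (k + if v' ∈ F then 1 else 0) ∈ annSet E F v₀ v' := by
        refine ⟨n + 1, p', by simp [hp', h1], ?_, hpn, ?_⟩
        · intro m hm
          by_cases hmn : m < n
          · have e1 : p' m = p m := if_pos (by omega)
            have e2 : p' (m + 1) = p (m + 1) := if_pos (by omega)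
            rw [e1, e2]
            exact h2 m hmn
          · have hmn' : m = n := by omega
            have e1 : p' m = p m := if_pos (by omega)
            rw [e1, hmn', hpn, h3]
            exact hvv'
        · have hfeq : (Finset.range (n + 1)).filter (fun m => p' m ∈ F)
              = (Finset.range (n + 1)).filter (fun m => p m ∈ F) := by
            apply Finset.filter_congr
            intro m hm
            have hmle : m ≤ n := by
              have := Finset.mem_range.mp hm; omega
            simp [hp', hmle]
          rw [show n + 1 + 1 = (n + 1) + 1 from rfl, Finset.range_add_one,
            Finset.filter_insert, hpn]
          by_cases hF : v' ∈ F
          · rw [if_pos hF, Finset.card_insert_of_notMem (by simp), hfeq, hcount,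
              if_pos hF]
          · rw [if_neg hF, if_neg hF, hfeq, hcount]; omega
      have hv' : (annSet E F v₀ v').Nonempty := ⟨_, hmem'⟩
      refine ⟨sSup (annSet E F v₀ v'), by simp only [dif_pos hv'], ?_, ?_⟩
      · have := le_csSup (hbd v') hmem'
        omega
      · intro hF
        have := le_csSup (hbd v') hmem'
        rw [if_pos hF] at this
        omega
    · simp only [dif_neg hv] at hvk
      exact absurd hvk (by simp)
  · intro v k hvk
    by_cases hv : (annSet E F v₀ v).Nonempty
    · simp only [dif_pos hv] at hvk
      have hk : sSup (annSet E F v₀ v) = k := Option.some.inj hvk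
      have hmem : k ∈ annSet E F v₀ v := hk ▸ Nat.sSup_mem hv (hbd v)
      obtain ⟨n, p, h1, h2, h3, hcount⟩ := hmem
      rw [← hcount]
      exact count_le E F v₀ h n p h1 h2
    · simp only [dif_neg hv] at hvk
      exact absurd hvk (by simp)
end
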